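/- Let α ∈ ℕ⁺ be a pattern and suppose there exists a variable i occurring in α such that ε ∉ L_i and for every k ∈ L_i, R_k = {i} (i.e., i is not the first symbol of α, and every variable immediately preceding some occurrence of i is always immediately followed by i and is not the last symbol of α). Then α is a fixed point of a nontrivial morphism. -/

import Mathlib

/-- Let α ∈ ℕ⁺ and let i be a variable occurring in α such that ε ∉ L_i
(α does not begin with i) and, for every k ∈ L_i (i.e., k·i is a factor
of α), R_k = {i} (every factor k·y of α has y = i, and α does not end
with k). Then α is a fixed point of a nontrivial morphism. -/
theorem stmt_6 (α : List ℕ) (hα : α ≠ []) (i : ℕ) (hi : i ∈ α)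
    (hL : α.head? ≠ some i)
    (hR : ∀ k : ℕ, [k, i] <:+: α →
      (∀ y : ℕ, [k, y] <:+: α → y = i) ∧ α.getLast? ≠ some k) :
    ∃ φ : ℕ → List ℕ, α.flatMap φ = α ∧ ∃ x ∈ α, φ x ≠ [x] := by
  classical
  set φ : ℕ → List ℕ :=
    fun x => if x = i then [] else if [x, i] <:+: α then [x, i] else [x] with hφ
  have pre : ∀ (a b : ℕ) (t : List ℕ), [a, b] <:+: a :: b :: t :=
    fun a b t => ⟨[], t, rfl⟩
  -- [i,i] is not a factor of α
  have hii : ¬ [i, i] <:+: α := by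
    intro h
    obtain ⟨hfoll, hlast⟩ := hR i h
    have hcl : ∀ l : List ℕ, l <:+ α → i ∈ l → α.getLast? = some i := by
      intro l
      induction l with
      | nil => intro _ hm; simp at hm
      | cons x t ih =>
        intro hsuf hmem
        have hts : t <:+ α := (List.suffix_cons x t).trans hsuf
        rcases List.mem_cons.mp hmem with heq | hmt
        · cases t with
          | nil =>
            obtain ⟨w, hw⟩ := hsuf
            rw [← hw, heq]
            simp
          | cons y t' =>
            have hxy : [x, y] <:+: α := (pre x y t').trans hsuf.isInfix
            rw [← heq] at hxy
            have : y = i := hfoll y hxy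
            exact ih hts (by simp [this])
        · exact ih hts hmt
    exact hlast (hcl α (List.suffix_refl α) hi)
  have main : ∀ n (l : List ℕ), l.length ≤ n → l <:+ α → l.head? ≠ some i →
      l.flatMap φ = l := by
    intro n
    induction n with
    | zero =>
      intro l hl _ _
      have : l = [] := List.eq_nil_of_length_eq_zero (Nat.le_zero.mp hl)
      simp [this]
    | succ n ih =>
      intro l hl hsuf hhd
      match l with
      | [] => simp
      | x :: t =>
        have hxi : x ≠ i := by intro h; exact hhd (by simp [h])
        have hts : t <:+ α := (List.suffix_cons x t).trans hsuf
        by_cases hx : [x, i] <:+: α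
        · obtain ⟨hfoll, hlast⟩ := hR x hx
          match t with
          | [] =>
            exfalso
            obtain ⟨w, hw⟩ := hsuf
            exact hlast (by rw [← hw]; simp)
          | y :: t' =>
            have hxy : [x, y] <:+: α := (pre x y t').trans hsuf.isInfix
            have hyi : y = i := hfoll y hxy
            have ht' : t' <:+ α := (List.suffix_cons y t').trans hts
            have hh' : t'.head? ≠ some i := by
              intro h
              match t', h, hts with
              | z :: t'', h, hts =>
                have hz : z = i := by simpa using h
                have hyz : [y, z] <:+: α := (pre y z t'').trans hts.isInfix
                rw [hyi, hz] at hyz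
                exact hii hyz
            have hrec : t'.flatMap φ = t' := by
              refine ih t' ?_ ht' hh'
              have : t'.length + 2 ≤ n + 1 := by simpa using hl
              omega
            simp only [List.flatMap_cons, hrec]; simp only [hφ]
            simp [hxi, hx, hyi]
        · have hth : t.head? ≠ some i := by
            intro h
            match t, h, hts with
            | y :: t', h, hts =>
              have hy : y = i := by simpa using h
              have hxy : [x, y] <:+: α := (pre x y t').trans hsuf.isInfix
              rw [hy] at hxy
              exact hx hxy
          have hrec : t.flatMap φ = t := ih t (by simpa using hl) hts hth
          simp only [List.flatMap_cons, hrec]; simp only [hφ]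
          simp [hxi, hx]
  refine ⟨φ, main α.length α le_rfl (List.suffix_refl α) hL, i, hi, ?_⟩
  simp [hφ]
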